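/- For every real constant c ≥ 4 there exists N such that for all integers n ≥ N the following holds. Let α := c·log₂ n / log₂ log₂ n. Then Σ_{r=0}^{⌊(log₂ n)^{1/3}⌋} e^{−α/(1+r)} ≤ (1/4)·(log₂ n)^{−297/c}. -/

import Mathlib

open Real Filter

set_option maxHeartbeats 1000000 in
lemma caps_aux (c : ℝ) (hc : 4 ≤ c) : ∀ᶠ L : ℝ in atTop,
    ∑ r ∈ Finset.range (⌊L ^ ((1 : ℝ) / 3)⌋₊ + 1),
        Real.exp (-(c * L / Real.logb 2 L) / (1 + (r : ℝ)))
      ≤ (1 / 4) * L ^ (-(297 : ℝ) / c) := by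
  have h1 : ∀ᶠ L : ℝ in atTop, (8 : ℝ) ≤ L := eventually_ge_atTop 8
  have h2 : ∀ᶠ L : ℝ in atTop, ‖Real.log L‖ ≤ ‖L ^ ((1:ℝ)/6)‖ :=
    (isLittleO_log_rpow_atTop (by norm_num : (0:ℝ) < 1/6)).eventuallyLE
  have h3 : ∀ᶠ L : ℝ in atTop, (78 : ℝ) ≤ L ^ ((1:ℝ)/3) :=
    (tendsto_rpow_atTop (by norm_num : (0:ℝ) < 1/3)).eventually_ge_atTop 78
  filter_upwards [h1, h2, h3] with L hL8 hlog h78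
  have hLpos : (0:ℝ) < L := by linarith
  set L13 := L ^ ((1:ℝ)/3) with hL13
  set L23 := L ^ ((2:ℝ)/3) with hL23
  set t := Real.log L with ht
  have hL13pos : 0 < L13 := Real.rpow_pos_of_pos hLpos _
  have hL23pos : 0 < L23 := Real.rpow_pos_of_pos hLpos _
  have hmul : L13 * L23 = L := by
    rw [hL13, hL23, ← Real.rpow_add hLpos]; norm_num
  have hsq : L13 * L13 = L23 := by
    rw [hL13, hL23, ← Real.rpow_add hLpos]; norm_num
  have hexp1 : Real.exp 1 < 2.7182818286 := Real.exp_one_lt_d9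
  have ht2 : (2:ℝ) ≤ t := by
    rw [ht, Real.le_log_iff_exp_le hLpos]
    have : Real.exp 2 = Real.exp 1 * Real.exp 1 := by rw [← Real.exp_add]; norm_num
    nlinarith [Real.exp_pos 1]
  have htpos : (0:ℝ) < t := by linarith
  have hlog2 : (1:ℝ)/2 ≤ Real.log 2 := by
    rw [Real.le_log_iff_exp_le (by norm_num : (0:ℝ) < 2)]
    have h : Real.exp 1 = Real.exp (1/2) * Real.exp (1/2) := by
      rw [← Real.exp_add]; norm_num
    nlinarith [Real.exp_pos (1/2 : ℝ)]
  -- t ≤ L^{1/6} and t^2 ≤ L13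
  have ht16 : t ≤ L ^ ((1:ℝ)/6) := by
    have h16pos : (0:ℝ) ≤ L ^ ((1:ℝ)/6) := (Real.rpow_pos_of_pos hLpos _).le
    calc t ≤ |t| := le_abs_self t
    _ ≤ |L ^ ((1:ℝ)/6)| := hlog
    _ = L ^ ((1:ℝ)/6) := abs_of_nonneg h16pos
  have htsq : t * t ≤ L13 := by
    have : L ^ ((1:ℝ)/6) * L ^ ((1:ℝ)/6) = L13 := by
      rw [hL13, ← Real.rpow_add hLpos]; norm_num
    nlinarith [Real.rpow_pos_of_pos hLpos ((1:ℝ)/6)]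
  -- count bound
  have hfloor : (⌊L13⌋₊ : ℝ) ≤ L13 := Nat.floor_le hL13pos.le
  have hcount : ((⌊L13⌋₊ : ℝ) + 1) ≤ L := by nlinarith
  -- per-term bound
  have hterm : ∀ r ∈ Finset.range (⌊L13⌋₊ + 1),
      Real.exp (-(c * L / Real.logb 2 L) / (1 + (r : ℝ))) ≤ Real.exp (-(L23 / t)) := by
    intro r hr
    have hrle : (r : ℝ) ≤ L13 := by
      have : r ≤ ⌊L13⌋₊ := Nat.lt_succ_iff.mp (Finset.mem_range.mp hr)
      exact le_trans (by exact_mod_cast this) hfloor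
    have hrpos : (0:ℝ) < 1 + (r : ℝ) := by positivity
    rw [Real.exp_le_exp]
    have hA : c * L / Real.logb 2 L = c * L * Real.log 2 / t := by
      rw [Real.logb, ← ht]
      field_simp
    rw [hA, neg_div, neg_le_neg_iff, div_div]
    rw [div_le_div_iff₀ htpos (by positivity)]
    have h1r : 1 + (r:ℝ) ≤ 2 * L13 := by nlinarith
    have hclog : (2:ℝ) ≤ c * Real.log 2 := by nlinarith
    rw [← hmul]
    linarith [mul_le_mul_of_nonneg_left h1r (mul_pos hL23pos htpos).le,
      mul_le_mul_of_nonneg_right hclog (mul_pos (mul_pos hL13pos hL23pos) htpos).le]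
  have hsum : ∑ r ∈ Finset.range (⌊L13⌋₊ + 1),
      Real.exp (-(c * L / Real.logb 2 L) / (1 + (r : ℝ)))
      ≤ ((⌊L13⌋₊ : ℝ) + 1) * Real.exp (-(L23 / t)) := by
    have := Finset.sum_le_card_nsmul _ _ _ hterm
    rwa [Finset.card_range, nsmul_eq_mul, Nat.cast_add, Nat.cast_one] at this
  refine hsum.trans ?_
  have hL : L = Real.exp t := (Real.exp_log hLpos).symm
  have hrpw : L ^ (-(297:ℝ)/c) = Real.exp ((-(297:ℝ)/c) * t) := by
    rw [Real.rpow_def_of_pos hLpos, ← ht]; ring_nf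
  have hcpos : (0:ℝ) < c := by linarith
  have h297 : (297:ℝ)/c * t ≤ 75 * t := by
    have h75 : (297:ℝ)/c ≤ 75 := by rw [div_le_iff₀ hcpos]; linarith
    exact mul_le_mul_of_nonneg_right h75 htpos.le
  have hbig : L23 / t ≥ t + (297:ℝ)/c * t + 2 := by
    have h78t : 78 * (t * t) ≤ L23 := by nlinarith
    rw [ge_iff_le, ← sub_nonneg, div_sub' htpos.ne']
    apply div_nonneg _ htpos.le
    nlinarith
  calc ((⌊L13⌋₊ : ℝ) + 1) * Real.exp (-(L23 / t))
      ≤ Real.exp t * Real.exp (-(L23 / t)) := by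
        rw [← hL]
        exact mul_le_mul_of_nonneg_right hcount (Real.exp_pos _).le
    _ = Real.exp (t - L23 / t) := by rw [← Real.exp_add]; ring_nf
    _ ≤ Real.exp ((-(297:ℝ)/c) * t + (-2)) := by
        rw [Real.exp_le_exp]
        have h : (-(297:ℝ))/c * t = -(297/c*t) := by ring
        linarith [h]
    _ = Real.exp (-2) * Real.exp ((-(297:ℝ)/c) * t) := by rw [← Real.exp_add]; ring_nf
    _ ≤ (1/4) * L ^ (-(297:ℝ)/c) := by
        rw [hrpw]
        apply mul_le_mul_of_nonneg_right _ (Real.exp_pos _).le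
        rw [Real.exp_neg, inv_le_comm₀ (Real.exp_pos _) (by norm_num)]
        have : Real.exp 2 = Real.exp 1 * Real.exp 1 := by rw [← Real.exp_add]; norm_num
        nlinarith [Real.exp_pos 1, Real.add_one_le_exp (1:ℝ)]

/-- **Initial sum of caps is small.** For every `c ≥ 4` there is `N` such that for all
`n ≥ N`, with `α = c log₂ n / log₂ log₂ n`,
`Σ_{r=0}^{⌊(log₂ n)^{1/3}⌋} e^{-α/(1+r)} ≤ (1/4) (log₂ n)^{-297/c}`. -/
theorem initial_caps_bound (c : ℝ) (hc : 4 ≤ c) :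
    ∃ N : ℕ, ∀ n : ℕ, N ≤ n →
      ∀ α : ℝ, α = c * Real.logb 2 n / Real.logb 2 (Real.logb 2 n) →
      ∑ r ∈ Finset.range (⌊(Real.logb 2 n) ^ ((1 : ℝ) / 3)⌋₊ + 1),
          Real.exp (-α / (1 + (r : ℝ)))
        ≤ (1 / 4) * (Real.logb 2 n) ^ (-(297 : ℝ) / c) := by
  obtain ⟨M, hM⟩ := eventually_atTop.mp (caps_aux c hc)
  refine ⟨⌈(2:ℝ) ^ max M 1⌉₊ + 1, fun n hn α hα => ?_⟩
  have hx : (2:ℝ) ^ max M 1 ≤ (n:ℝ) := by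
    calc (2:ℝ) ^ max M 1 ≤ (⌈(2:ℝ) ^ max M 1⌉₊ : ℝ) := Nat.le_ceil _
    _ ≤ (n:ℝ) := by exact_mod_cast le_trans (Nat.le_succ _) hn
  have h2 : (2:ℝ) ^ (1:ℝ) ≤ (2:ℝ) ^ max M 1 :=
    Real.rpow_le_rpow_of_exponent_le one_le_two (by exact le_max_right M 1)
  have hnpos : (0:ℝ) < (n:ℝ) := by
    rw [Real.rpow_one] at h2; linarith
  have hL : M ≤ Real.logb 2 n := by
    refine le_trans (le_max_left M 1) ?_
    exact (Real.le_logb_iff_rpow_le one_lt_two hnpos).mpr hx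
  rw [hα]
  exact hM _ hL
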